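/- Let L be an n×n integer matrix with nonzero determinant, and consider the 2n×2n block matrix M = [[L + I, -I], [-I, L + I]] where I is the n×n identity. Then M is equivalent over ℤ (via elementary row and column operations invertible over ℤ) to the block diagonal matrix [[I, 0], [0, L·(L+2I)]]; in particular det(M) = det(L) · det(L + 2I), and the cokernel of M is isomorphic to the cokernel of L·(L+2I). -/

import Mathlib

open Matrix

/-- The block matrix `[[L+I, -I], [-I, L+I]]` is ℤ-equivalent to
`diag(I, L·(L+2I))`; in particular its determinant is `det L · det (L+2I)` and its
cokernel is isomorphic to the cokernel of `L·(L+2I)`. -/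
theorem stmt2 (n : ℕ) (L : Matrix (Fin n) (Fin n) ℤ) (hL : L.det ≠ 0) :
    (∃ U V : Matrix (Fin n ⊕ Fin n) (Fin n ⊕ Fin n) ℤ,
        IsUnit U.det ∧ IsUnit V.det ∧
          Matrix.fromBlocks (L + 1) (-1) (-1) (L + 1) =
            U * Matrix.fromBlocks 1 0 0 (L * (L + 2)) * V) ∧
      (Matrix.fromBlocks (L + 1) (-1) (-1) (L + 1)).det = L.det * (L + 2).det ∧
      Nonempty
        ((((Fin n ⊕ Fin n) → ℤ) ⧸
            LinearMap.range (Matrix.toLin' (Matrix.fromBlocks (L + 1) (-1) (-1) (L + 1))))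
          ≃+ ((Fin n → ℤ) ⧸ LinearMap.range (Matrix.toLin' (L * (L + 2))))) := by
  set A : Matrix (Fin n) (Fin n) ℤ := L + 1 with hA
  set K : Matrix (Fin n) (Fin n) ℤ := L * (L + 2) with hK
  set M : Matrix (Fin n ⊕ Fin n) (Fin n ⊕ Fin n) ℤ := fromBlocks A (-1) (-1) A with hMdef
  set D : Matrix (Fin n ⊕ Fin n) (Fin n ⊕ Fin n) ℤ := fromBlocks 1 0 0 K with hDdef
  set U : Matrix (Fin n ⊕ Fin n) (Fin n ⊕ Fin n) ℤ := fromBlocks A 1 (-1) 0 with hUdef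
  set P : Matrix (Fin n ⊕ Fin n) (Fin n ⊕ Fin n) ℤ := fromBlocks 0 (-1) 1 A with hPdef
  set V : Matrix (Fin n ⊕ Fin n) (Fin n ⊕ Fin n) ℤ := fromBlocks 1 (-A) 0 1 with hVdef
  set W : Matrix (Fin n ⊕ Fin n) (Fin n ⊕ Fin n) ℤ := fromBlocks 1 A 0 1 with hWdef
  have hUP : U * P = 1 := by
    rw [hUdef, hPdef, fromBlocks_multiply, ← fromBlocks_one, fromBlocks_inj]
    refine ⟨by noncomm_ring, by noncomm_ring, by noncomm_ring, by noncomm_ring⟩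
  have hPU : P * U = 1 := by
    rw [hUdef, hPdef, fromBlocks_multiply, ← fromBlocks_one, fromBlocks_inj]
    refine ⟨by noncomm_ring, by noncomm_ring, by noncomm_ring, by noncomm_ring⟩
  have hVW : V * W = 1 := by
    rw [hVdef, hWdef, fromBlocks_multiply, ← fromBlocks_one, fromBlocks_inj]
    refine ⟨by noncomm_ring, by noncomm_ring, by noncomm_ring, by noncomm_ring⟩
  have hWV : W * V = 1 := by
    rw [hVdef, hWdef, fromBlocks_multiply, ← fromBlocks_one, fromBlocks_inj]
    refine ⟨by noncomm_ring, by noncomm_ring, by noncomm_ring, by noncomm_ring⟩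
  have hM : M = U * D * V := by
    rw [hUdef, hDdef, hVdef, hMdef, fromBlocks_multiply, fromBlocks_multiply,
      fromBlocks_inj]
    refine ⟨by noncomm_ring, ?_, by noncomm_ring, by noncomm_ring⟩
    rw [hA, hK]; noncomm_ring
  have hUdet : IsUnit U.det := by
    apply IsUnit.of_mul_eq_one P.det
    rw [← det_mul, hUP, det_one]
  have hVdet : IsUnit V.det := by
    apply IsUnit.of_mul_eq_one W.det
    rw [← det_mul, hVW, det_one]
  refine ⟨⟨U, V, hUdet, hVdet, hM⟩, ?_, ?_⟩
  · -- determinant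
    have hfac : M = fromBlocks 1 (-1) 0 1 * fromBlocks L 0 (-1) (L + 2) *
        fromBlocks 1 1 0 1 := by
      rw [hMdef, fromBlocks_multiply, fromBlocks_multiply, fromBlocks_inj, hA]
      refine ⟨by noncomm_ring, by noncomm_ring, by noncomm_ring, by noncomm_ring⟩
    rw [hfac, det_mul, det_mul, det_fromBlocks_zero₂₁, det_fromBlocks_zero₂₁,
      det_fromBlocks_zero₁₂]
    simp
  · -- cokernel
    -- Step 1: coker M ≃ coker D via the unimodular U, V
    have htU : Matrix.toLin' U ∘ₗ Matrix.toLin' P = LinearMap.id := by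
      rw [← Matrix.toLin'_mul, hUP, Matrix.toLin'_one]
    have htP : Matrix.toLin' P ∘ₗ Matrix.toLin' U = LinearMap.id := by
      rw [← Matrix.toLin'_mul, hPU, Matrix.toLin'_one]
    let eU : ((Fin n ⊕ Fin n) → ℤ) ≃ₗ[ℤ] ((Fin n ⊕ Fin n) → ℤ) :=
      LinearEquiv.ofLinear (Matrix.toLin' U) (Matrix.toLin' P) htU htP
    have hVsurj : Function.Surjective (Matrix.toLin' V) := by
      intro y
      refine ⟨Matrix.toLin' W y, ?_⟩
      have : (Matrix.toLin' V ∘ₗ Matrix.toLin' W) y = y := by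
        rw [← Matrix.toLin'_mul, hVW, Matrix.toLin'_one]; rfl
      simpa using this
    have hrDV : LinearMap.range (Matrix.toLin' (D * V)) =
        LinearMap.range (Matrix.toLin' D) := by
      rw [Matrix.toLin'_mul, LinearMap.range_comp, LinearMap.range_eq_top.mpr hVsurj,
        Submodule.map_top]
    have hmap : Submodule.map (eU : ((Fin n ⊕ Fin n) → ℤ) →ₗ[ℤ] _)
        (LinearMap.range (Matrix.toLin' (D * V))) = LinearMap.range (Matrix.toLin' M) := by
      have : Matrix.toLin' M = Matrix.toLin' U ∘ₗ Matrix.toLin' (D * V) := by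
        rw [← Matrix.toLin'_mul, ← mul_assoc, ← hM]
      rw [this, LinearMap.range_comp]
      rfl
    have e1 : (((Fin n ⊕ Fin n) → ℤ) ⧸ LinearMap.range (Matrix.toLin' M)) ≃ₗ[ℤ]
        (((Fin n ⊕ Fin n) → ℤ) ⧸ LinearMap.range (Matrix.toLin' D)) :=
      (Submodule.Quotient.equiv _ _ eU hmap).symm.trans
        (Submodule.quotEquivOfEq _ _ hrDV)
    -- Step 2: coker D ≃ coker K
    let f : ((Fin n ⊕ Fin n) → ℤ) →ₗ[ℤ]
        ((Fin n → ℤ) ⧸ LinearMap.range (Matrix.toLin' K)) :=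
      (LinearMap.range (Matrix.toLin' K)).mkQ ∘ₗ LinearMap.funLeft ℤ ℤ Sum.inr
    have hfsurj : Function.Surjective f := by
      intro z
      obtain ⟨y, rfl⟩ := Submodule.Quotient.mk_surjective _ z
      exact ⟨Sum.elim 0 y, rfl⟩
    have hker : LinearMap.ker f = LinearMap.range (Matrix.toLin' D) := by
      ext y
      simp only [LinearMap.mem_ker, LinearMap.coe_comp, Function.comp_apply,
        Submodule.mkQ_apply, Submodule.Quotient.mk_eq_zero, LinearMap.mem_range, f]
      constructor
      · rintro ⟨z, hz⟩
        refine ⟨Sum.elim (y ∘ Sum.inl) z, ?_⟩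
        have hz' : K *ᵥ z = y ∘ Sum.inr := by
          rw [← Matrix.toLin'_apply, hz]; rfl
        rw [Matrix.toLin'_apply, hDdef]
        funext i
        cases i with
        | inl i => simp [fromBlocks_mulVec]
        | inr i =>
          simp [fromBlocks_mulVec, hz']
      · rintro ⟨x, rfl⟩
        refine ⟨x ∘ Sum.inr, ?_⟩
        have hx : x = Sum.elim (x ∘ Sum.inl) (x ∘ Sum.inr) := by
          funext i; cases i <;> rfl
        rw [Matrix.toLin'_apply, Matrix.toLin'_apply, hDdef]
        funext i
        conv_rhs => rw [hx]
        rw [fromBlocks_mulVec]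
        simp [LinearMap.funLeft]
    have e2 : (((Fin n ⊕ Fin n) → ℤ) ⧸ LinearMap.range (Matrix.toLin' D)) ≃ₗ[ℤ]
        ((Fin n → ℤ) ⧸ LinearMap.range (Matrix.toLin' K)) :=
      (Submodule.quotEquivOfEq _ _ hker.symm).trans (f.quotKerEquivOfSurjective hfsurj)
    exact ⟨(e1.trans e2).toAddEquiv⟩
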